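/- Let s, n be positive integers and let n₁, …, n_{s+1} be positive integers with n₁ ≤ n₂ ≤ … ≤ n_{s+1} satisfying 1/n = 1/n₁ + 1/n₂ + … + 1/n_{s+1}. Then for every k with 2 ≤ k ≤ s+1, n_k ≤ n^(2^(k-1)) · (s+2-k) · ∏_{i=0}^{k-2} (s+1-i)^(2^(k-2-i)). -/

import Mathlib

open Finset

/-- The bound for the `j`-th term (0-indexed). -/
def ufdBound (s n j : ℕ) : ℕ :=
  n ^ 2 ^ j * (s + 1 - j) * ∏ i ∈ Finset.range j, (s + 1 - i) ^ 2 ^ (j - 1 - i)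

lemma ufd_prod_bound (s n : ℕ) (j : ℕ) :
    ∏ i ∈ Finset.range j, ufdBound s n i
      = n ^ (2 ^ j - 1) * ∏ i ∈ Finset.range j, (s + 1 - i) ^ 2 ^ (j - 1 - i) := by
  induction j with
  | zero => simp
  | succ j ih =>
    rw [Finset.prod_range_succ, ih, ufdBound]
    have h1 : ∏ i ∈ Finset.range (j+1), (s + 1 - i) ^ 2 ^ (j + 1 - 1 - i)
        = (∏ i ∈ Finset.range j, (s + 1 - i) ^ 2 ^ (j - 1 - i)) ^ 2 * (s + 1 - j) := by
      rw [Finset.prod_range_succ, ← Finset.prod_pow]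
      have ha : j + 1 - 1 - j = 0 := by omega
      rw [ha]
      congr 1
      · apply Finset.prod_congr rfl
        intro i hi
        rw [Finset.mem_range] at hi
        have : j + 1 - 1 - i = (j - 1 - i) + 1 := by omega
        rw [this, pow_succ, pow_mul]
      · norm_num
    rw [h1]
    have h2 : n ^ (2 ^ (j+1) - 1) = n ^ (2 ^ j - 1) * n ^ 2 ^ j := by
      rw [← pow_add]
      congr 1
      have := Nat.one_le_two_pow (n := j)
      omega
    rw [h2]
    ring

/-- Key step: each term is bounded by `(s+1-j) * n * (product of earlier terms)`. -/
lemma ufd_key (s n : ℕ) (hn : 1 ≤ n) (M : ℕ → ℕ) (hM : ∀ i, 1 ≤ M i)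
    (hmono : Monotone M)
    (heq : (1 : ℚ) / n = ∑ i ∈ Finset.range (s + 1), 1 / (M i : ℚ))
    (j : ℕ) (hj : j ≤ s) :
    M j ≤ (s + 1 - j) * n * ∏ i ∈ Finset.range j, M i := by
  have hMpos : ∀ i, (0 : ℚ) < (M i : ℚ) := by
    intro i; exact_mod_cast hM i
  have hnpos : (0 : ℚ) < (n : ℚ) := by exact_mod_cast hn
  set T : ℚ := ∑ i ∈ Finset.Ico j (s + 1), 1 / (M i : ℚ) with hT
  -- split the sum
  have hsplit : (∑ i ∈ Finset.range j, 1 / (M i : ℚ)) + T = (1 : ℚ) / n := by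
    rw [heq, hT, Finset.range_eq_Ico, Finset.range_eq_Ico]
    exact Finset.sum_Ico_consecutive (fun i => 1 / (M i : ℚ)) (Nat.zero_le j) (by omega : j ≤ s + 1)
  have hTpos : 0 < T := by
    apply Finset.sum_pos
    · intro i _
      have := hMpos i
      positivity
    · exact ⟨j, Finset.mem_Ico.mpr ⟨le_refl j, by omega⟩⟩
  -- upper bound on T
  have hTupper : T ≤ ((s + 1 - j : ℕ) : ℚ) * (1 / (M j : ℚ)) := by
    rw [hT]
    have h := Finset.sum_le_card_nsmul (Finset.Ico j (s + 1))
      (fun i => 1 / (M i : ℚ)) (1 / (M j : ℚ)) ?_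
    · simpa [Nat.card_Ico, nsmul_eq_mul] using h
    · intro i hi
      rw [Finset.mem_Ico] at hi
      exact one_div_le_one_div_of_le (hMpos j) (by exact_mod_cast hmono hi.1)
  -- lower bound on T
  set A : ℕ := ∏ i ∈ Finset.range j, M i with hA
  have hApos : (0 : ℚ) < (A : ℚ) := by
    have : 1 ≤ A := Finset.one_le_prod' (fun i _ => hM i)
    exact_mod_cast this
  set B : ℕ := ∑ i ∈ Finset.range j, n * ∏ i' ∈ (Finset.range j).erase i, M i' with hB
  have hint : (n : ℚ) * A * T = (A : ℚ) - (B : ℚ) := by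
    have hT' : T = 1 / n - ∑ i ∈ Finset.range j, 1 / (M i : ℚ) := by
      linarith [hsplit]
    rw [hT', mul_sub, Finset.mul_sum]
    have e1 : (n : ℚ) * A * (1 / n) = (A : ℚ) := by
      field_simp
    have e2 : ∀ i ∈ Finset.range j,
        (n : ℚ) * A * (1 / (M i : ℚ)) = ((n * ∏ i' ∈ (Finset.range j).erase i, M i' : ℕ) : ℚ) := by
      intro i hi
      have hne : (M i : ℚ) ≠ 0 := ne_of_gt (hMpos i)
      have h0 : M i * ∏ i' ∈ (Finset.range j).erase i, M i' = A :=
        (Finset.mul_prod_erase _ M hi).trans hA.symm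
      have hprod : (M i : ℚ) * ∏ i' ∈ (Finset.range j).erase i, (M i' : ℚ) = (A : ℚ) := by
        exact_mod_cast h0
      push_cast
      rw [← hprod]
      field_simp
    rw [Finset.sum_congr rfl e2, e1, hB]
    push_cast
    ring_nf
  have hABpos : (0 : ℚ) < (A : ℚ) - (B : ℚ) := by
    rw [← hint]; positivity
  have hBA : B < A := by exact_mod_cast sub_pos.mp hABpos
  have hge1 : (1 : ℚ) ≤ (n : ℚ) * A * T := by
    rw [hint]
    have : (B : ℚ) + 1 ≤ (A : ℚ) := by exact_mod_cast hBA
    linarith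
  -- combine
  have hfinal : (M j : ℚ) ≤ ((s + 1 - j : ℕ) : ℚ) * n * A := by
    have h1 : (M j : ℚ) ≤ (M j : ℚ) * ((n : ℚ) * A * T) := by
      nlinarith [hMpos j]
    have h2 : (M j : ℚ) * T ≤ ((s + 1 - j : ℕ) : ℚ) := by
      have hne : (M j : ℚ) ≠ 0 := ne_of_gt (hMpos j)
      have := mul_le_mul_of_nonneg_left hTupper (le_of_lt (hMpos j))
      calc (M j : ℚ) * T ≤ (M j : ℚ) * (((s + 1 - j : ℕ) : ℚ) * (1 / (M j : ℚ))) := this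
        _ = ((s + 1 - j : ℕ) : ℚ) := by field_simp
    calc (M j : ℚ) ≤ (M j : ℚ) * ((n : ℚ) * A * T) := h1
      _ = ((M j : ℚ) * T) * ((n : ℚ) * A) := by ring
      _ ≤ ((s + 1 - j : ℕ) : ℚ) * ((n : ℚ) * A) := by
          apply mul_le_mul_of_nonneg_right h2; positivity
      _ = ((s + 1 - j : ℕ) : ℚ) * n * A := by ring
  exact_mod_cast hfinal

lemma ufd_main (s n : ℕ) (hn : 1 ≤ n) (M : ℕ → ℕ) (hM : ∀ i, 1 ≤ M i)
    (hmono : Monotone M)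
    (heq : (1 : ℚ) / n = ∑ i ∈ Finset.range (s + 1), 1 / (M i : ℚ)) :
    ∀ j, j ≤ s → M j ≤ ufdBound s n j := by
  intro j
  induction j using Nat.strong_induction_on with
  | _ j ih =>
    intro hj
    calc M j ≤ (s + 1 - j) * n * ∏ i ∈ Finset.range j, M i :=
          ufd_key s n hn M hM hmono heq j hj
      _ ≤ (s + 1 - j) * n * ∏ i ∈ Finset.range j, ufdBound s n i := by
          apply Nat.mul_le_mul_left
          apply Finset.prod_le_prod'
          intro i hi
          rw [Finset.mem_range] at hi
          exact ih i hi (by omega)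
      _ = ufdBound s n j := by
          rw [ufd_prod_bound, ufdBound]
          have h2 : n ^ 2 ^ j = n * n ^ (2 ^ j - 1) := by
            rw [← pow_succ']
            congr 1
            have := Nat.one_le_two_pow (n := j)
            omega
          rw [h2]
          ring

/-- **Lemma 2.1, second part.** If `n₁ ≤ … ≤ n_{s+1}` are positive integers
with `1/n = 1/n₁ + ⋯ + 1/n_{s+1}`, then for every `2 ≤ k ≤ s+1`,
`n_k ≤ n^(2^(k-1)) * (s+2-k) * ∏_{i=0}^{k-2} (s+1-i)^(2^(k-2-i))`.
Here `n_k` is `m ⟨k-1, _⟩` (indices shifted to start at `0`). -/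
theorem kth_term_le_of_unit_fraction_decomposition
    (s n : ℕ) (hs : 1 ≤ s) (hn : 1 ≤ n)
    (m : Fin (s + 1) → ℕ) (hm : ∀ i, 1 ≤ m i) (hmono : Monotone m)
    (heq : (1 : ℚ) / n = ∑ i, 1 / (m i : ℚ))
    (k : ℕ) (hk2 : 2 ≤ k) (hks : k ≤ s + 1) :
    m ⟨k - 1, by omega⟩ ≤
      n ^ 2 ^ (k - 1) * (s + 2 - k) * ∏ i ∈ Finset.range (k - 1), (s + 1 - i) ^ 2 ^ (k - 2 - i) := by
  set M : ℕ → ℕ := fun i => m ⟨min i s, by omega⟩ with hMdef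
  have hM : ∀ i, 1 ≤ M i := fun i => hm _
  have hMmono : Monotone M := by
    intro a b hab
    exact hmono (by simp [Fin.mk_le_mk]; omega)
  have hagree : ∀ i : Fin (s + 1), M i.val = m i := by
    intro i
    simp only [hMdef]
    congr 1
    exact Fin.ext (by simp; omega)
  have heq' : (1 : ℚ) / n = ∑ i ∈ Finset.range (s + 1), 1 / (M i : ℚ) := by
    rw [heq, ← Fin.sum_univ_eq_sum_range (fun i => 1 / (M i : ℚ)) (s + 1)]
    apply Finset.sum_congr rfl
    intro i _
    rw [hagree]
  have hbound := ufd_main s n hn M hM hMmono heq' (k - 1) (by omega)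
  have hMk : M (k - 1) = m ⟨k - 1, by omega⟩ := hagree ⟨k - 1, by omega⟩
  rw [hMk] at hbound
  unfold ufdBound at hbound
  have h1 : s + 1 - (k - 1) = s + 2 - k := by omega
  have h2 : ∀ i, k - 1 - 1 - i = k - 2 - i := by intro i; omega
  calc m ⟨k - 1, by omega⟩
      ≤ n ^ 2 ^ (k-1) * (s + 1 - (k-1)) * ∏ i ∈ Finset.range (k-1), (s + 1 - i) ^ 2 ^ (k-1-1-i) := hbound
    _ = n ^ 2 ^ (k-1) * (s + 2 - k) * ∏ i ∈ Finset.range (k-1), (s + 1 - i) ^ 2 ^ (k-2-i) := by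
        simp only [h1, h2]
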